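/- Let H be a finite-dimensional real vector space with a symmetric bilinear form q, and let V ⊂ H be a 2-dimensional subspace on which q is positive definite. Let q_ℂ be the ℂ-bilinear extension of q to the complexification H_ℂ and V_ℂ ⊂ H_ℂ the complexification of V. Then the set of complex lines l ⊂ V_ℂ that are isotropic, i.e. satisfy q_ℂ(x,x) = 0 for all x ∈ l, has exactly two elements. -/

import Mathlib

open scoped TensorProduct
open Module



lemma aux_rank_one {K M : Type*} [Field K] [AddCommGroup M] [Module K M]
    (W : Submodule K M) (h : Module.finrank K W = 1) :
    ∃ x : M, x ≠ 0 ∧ W = Submodule.span K {x} := by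
  obtain ⟨v, hv0, hv⟩ := finrank_eq_one_iff'.mp h
  refine ⟨v, by simpa using hv0, le_antisymm ?_ ?_⟩
  · intro w hw
    obtain ⟨c, hc⟩ := hv ⟨w, hw⟩
    rw [Submodule.mem_span_singleton]
    exact ⟨c, congrArg Subtype.val hc⟩
  · rw [Submodule.span_singleton_le_iff_mem]; exact v.2

lemma aux_ortho (H : Type*) [AddCommGroup H] [Module ℝ H] [FiniteDimensional ℝ H]
    (q : H →ₗ[ℝ] H →ₗ[ℝ] ℝ) (hqsymm : ∀ x y : H, q x y = q y x)
    (V : Submodule ℝ H) (hV : Module.finrank ℝ V = 2)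
    (hpos : ∀ v ∈ V, v ≠ 0 → 0 < q v v) :
    ∃ e f : H, e ∈ V ∧ f ∈ V ∧ q e e = 1 ∧ q f f = 1 ∧ q e f = 0 ∧
      ∀ v ∈ V, v ∈ Submodule.span ℝ ({e, f} : Set H) := by
  set B : LinearMap.BilinForm ℝ V := LinearMap.BilinForm.restrict q V with hB
  have hBsymm : LinearMap.IsSymm B := LinearMap.isSymm_def.mpr fun x y => hqsymm x y
  obtain ⟨b0, hb0⟩ := LinearMap.BilinForm.exists_orthogonal_basis hBsymm
  set b : Basis (Fin 2) ℝ V := b0.reindex (finCongr hV) with hbdef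
  have hborth : ∀ i j : Fin 2, i ≠ j → q (b i : H) (b j : H) = 0 := by
    intro i j hij
    have hne : (finCongr hV).symm i ≠ (finCongr hV).symm j :=
      fun h => hij ((finCongr hV).symm.injective h)
    have := hb0 hne
    simpa [hbdef, Module.Basis.reindex_apply, hB, LinearMap.BilinForm.restrict_apply,
      LinearMap.domRestrict_apply] using this
  have hbpos : ∀ i : Fin 2, 0 < q (b i : H) (b i : H) := by
    intro i
    refine hpos _ (b i).2 ?_
    intro h
    exact b.ne_zero i (by ext; simpa using h)
  set c : Fin 2 → ℝ := fun i => (Real.sqrt (q (b i : H) (b i : H)))⁻¹ with hc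
  have hcpos : ∀ i, 0 < c i := fun i => by
    simp only [hc]; exact inv_pos.mpr (Real.sqrt_pos.mpr (hbpos i))
  set w : Fin 2 → H := fun i => c i • (b i : H) with hw
  have hdiag : ∀ i, q (w i) (w i) = 1 := by
    intro i
    simp only [hw, map_smul, LinearMap.smul_apply, smul_eq_mul, hc]
    have h0 : Real.sqrt (q (b i : H) (b i : H)) ≠ 0 :=
      ne_of_gt (Real.sqrt_pos.mpr (hbpos i))
    field_simp
    rw [Real.sq_sqrt (hbpos i).le]
  have hoff : q (w 0) (w 1) = 0 := by
    simp only [hw, map_smul, LinearMap.smul_apply, smul_eq_mul]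
    rw [hborth 0 1 (by decide)]; ring
  refine ⟨w 0, w 1, Submodule.smul_mem _ _ (b 0).2, Submodule.smul_mem _ _ (b 1).2,
    hdiag 0, hdiag 1, hoff, ?_⟩
  intro v hv
  have hrepr := b.sum_repr ⟨v, hv⟩
  rw [Fin.sum_univ_two] at hrepr
  have hv' : b.repr ⟨v, hv⟩ 0 • (b 0 : H) + b.repr ⟨v, hv⟩ 1 • (b 1 : H) = v := by
    have := congrArg Subtype.val hrepr
    simpa using this
  have key : (b.repr ⟨v, hv⟩ 0 * (c 0)⁻¹) • w 0 + (b.repr ⟨v, hv⟩ 1 * (c 1)⁻¹) • w 1 = v := by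
    simp only [hw, smul_smul]
    rw [mul_assoc, inv_mul_cancel₀ (ne_of_gt (hcpos 0)), mul_one,
      mul_assoc, inv_mul_cancel₀ (ne_of_gt (hcpos 1)), mul_one]
    exact hv'
  have hmem : (b.repr ⟨v, hv⟩ 0 * (c 0)⁻¹) • w 0 + (b.repr ⟨v, hv⟩ 1 * (c 1)⁻¹) • w 1 ∈
      Submodule.span ℝ ({w 0, w 1} : Set H) :=
    Submodule.add_mem _
      (Submodule.smul_mem _ _ (Submodule.subset_span (by simp)))
      (Submodule.smul_mem _ _ (Submodule.subset_span (by simp)))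
  rwa [key] at hmem


/-- converse direction in Remark 1.5. Let `H` be a finite-dimensional real
vector space with a symmetric bilinear form `q`, and `V ⊂ H` a 2-dimensional subspace on
which `q` is positive definite. Let `qC` be the ℂ-bilinear extension of `q` to `ℂ ⊗[ℝ] H`
and `V_ℂ` the complexification of `V`. Then the set of isotropic complex lines `l ⊂ V_ℂ`
has exactly two elements. -/
theorem positive_plane_has_two_isotropic_lines
    (H : Type*) [AddCommGroup H] [Module ℝ H] [FiniteDimensional ℝ H]
    (q : H →ₗ[ℝ] H →ₗ[ℝ] ℝ) (hqsymm : ∀ x y : H, q x y = q y x)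
    (qC : (ℂ ⊗[ℝ] H) →ₗ[ℂ] (ℂ ⊗[ℝ] H) →ₗ[ℂ] ℂ)
    (hqC : ∀ a b : H, qC ((1 : ℂ) ⊗ₜ[ℝ] a) ((1 : ℂ) ⊗ₜ[ℝ] b) = q a b)
    (V : Submodule ℝ H) (hV : Module.finrank ℝ V = 2)
    (hpos : ∀ v ∈ V, v ≠ 0 → 0 < q v v) :
    ∃ W₁ W₂ : Submodule ℂ (ℂ ⊗[ℝ] H), W₁ ≠ W₂ ∧
      {W : Submodule ℂ (ℂ ⊗[ℝ] H) |
          W ≤ Submodule.span ℂ ((fun v : H => (1 : ℂ) ⊗ₜ[ℝ] v) '' (V : Set H)) ∧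
          Module.finrank ℂ W = 1 ∧ ∀ x ∈ W, qC x x = 0}
        = {W₁, W₂} := by
  obtain ⟨e, f, heV, hfV, hee, hff, hef, hspan⟩ := aux_ortho H q hqsymm V hV hpos
  have hfe : q f e = 0 := by rw [hqsymm]; exact hef
  set E : ℂ ⊗[ℝ] H := (1 : ℂ) ⊗ₜ[ℝ] e with hEdef
  set F : ℂ ⊗[ℝ] H := (1 : ℂ) ⊗ₜ[ℝ] f with hFdef
  have hEE : qC E E = 1 := by rw [hEdef, hqC, hee]; norm_num
  have hFF : qC F F = 1 := by rw [hFdef, hqC, hff]; norm_num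
  have hEF : qC E F = 0 := by rw [hEdef, hFdef, hqC, hef]; norm_num
  have hFE : qC F E = 0 := by rw [hEdef, hFdef, hqC, hfe]; norm_num
  have pair : ∀ a b a' b' : ℂ,
      qC (a • E + b • F) (a' • E + b' • F) = a * a' + b * b' := by
    intro a b a' b'
    simp only [map_add, map_smul, LinearMap.add_apply, LinearMap.smul_apply,
      smul_eq_mul, hEE, hFF, hEF, hFE]
    ring
  set S : Submodule ℂ (ℂ ⊗[ℝ] H) :=
    Submodule.span ℂ ((fun v : H => (1 : ℂ) ⊗ₜ[ℝ] v) '' (V : Set H)) with hSdef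
  have hES : E ∈ S := Submodule.subset_span ⟨e, heV, rfl⟩
  have hFS : F ∈ S := Submodule.subset_span ⟨f, hfV, rfl⟩
  have hSle : S ≤ Submodule.span ℂ ({E, F} : Set (ℂ ⊗[ℝ] H)) := by
    rw [hSdef, Submodule.span_le]
    rintro _ ⟨v, hv, rfl⟩
    obtain ⟨a, b, hab⟩ := Submodule.mem_span_pair.mp (hspan v hv)
    have h1 : (1 : ℂ) ⊗ₜ[ℝ] v = (a : ℂ) • E + (b : ℂ) • F := by
      rw [← hab, TensorProduct.tmul_add, TensorProduct.tmul_smul, TensorProduct.tmul_smul,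
        ← hEdef, ← hFdef, ← algebraMap_smul ℂ a E, ← algebraMap_smul ℂ b F]
      rfl
    show (1 : ℂ) ⊗ₜ[ℝ] v ∈ Submodule.span ℂ ({E, F} : Set (ℂ ⊗[ℝ] H))
    rw [h1]
    exact Submodule.add_mem _
      (Submodule.smul_mem _ _ (Submodule.subset_span (by simp)))
      (Submodule.smul_mem _ _ (Submodule.subset_span (by simp)))
  -- the two isotropic lines
  have key : ∀ b : ℂ, b * b = -1 →
      (Submodule.span ℂ {E + b • F} : Submodule ℂ (ℂ ⊗[ℝ] H)) ≤ S ∧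
      Module.finrank ℂ (Submodule.span ℂ {E + b • F} : Submodule ℂ (ℂ ⊗[ℝ] H)) = 1 ∧
      ∀ x ∈ (Submodule.span ℂ {E + b • F} : Submodule ℂ (ℂ ⊗[ℝ] H)), qC x x = 0 := by
    intro b hb
    have hcomb : E + b • F = (1 : ℂ) • E + b • F := by rw [one_smul]
    have hne : E + b • F ≠ 0 := by
      intro h0
      have : qC (E + b • F) E = 1 := by
        rw [hcomb]
        have := pair 1 b 1 0
        simpa using this
      rw [h0] at this
      simp at this
    refine ⟨?_, finrank_span_singleton hne, ?_⟩
    · rw [Submodule.span_singleton_le_iff_mem]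
      exact Submodule.add_mem _ hES (Submodule.smul_mem _ _ hFS)
    · intro x hx
      obtain ⟨c, hc⟩ := Submodule.mem_span_singleton.mp hx
      have hval : qC (E + b • F) (E + b • F) = 0 := by
        rw [hcomb, pair 1 b 1 b, hb]; ring
      rw [← hc]
      simp only [map_smul, LinearMap.smul_apply, smul_eq_mul, hval]
      ring
  obtain ⟨hle₁, hr₁, hiso₁⟩ := key Complex.I Complex.I_mul_I
  obtain ⟨hle₂, hr₂, hiso₂⟩ := key (-Complex.I) (by simp [Complex.I_mul_I])
  refine ⟨Submodule.span ℂ {E + Complex.I • F}, Submodule.span ℂ {E + (-Complex.I) • F},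
    ?_, ?_⟩
  · -- the two lines are distinct
    intro h
    have hmem : E + Complex.I • F ∈ Submodule.span ℂ {E + (-Complex.I) • F} := by
      rw [← h]; exact Submodule.mem_span_singleton_self _
    obtain ⟨c, hc⟩ := Submodule.mem_span_singleton.mp hmem
    have h1 : qC (c • (E + (-Complex.I) • F)) E = qC (E + Complex.I • F) E := by rw [hc]
    have h2 : qC (c • (E + (-Complex.I) • F)) F = qC (E + Complex.I • F) F := by rw [hc]
    have e1 : qC (E + (-Complex.I) • F) E = 1 := by
      have := pair 1 (-Complex.I) 1 0; simpa using this
    have e2 : qC (E + Complex.I • F) E = 1 := by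
      have := pair 1 Complex.I 1 0; simpa using this
    have e3 : qC (E + (-Complex.I) • F) F = -Complex.I := by
      have := pair 1 (-Complex.I) 0 1; simpa using this
    have e4 : qC (E + Complex.I • F) F = Complex.I := by
      have := pair 1 Complex.I 0 1; simpa using this
    rw [map_smul, LinearMap.smul_apply, smul_eq_mul, e1, e2, mul_one] at h1
    rw [map_smul, LinearMap.smul_apply, smul_eq_mul, e3, e4, h1, one_mul] at h2
    have : (2 : ℂ) * Complex.I = 0 := by rw [two_mul]; linear_combination -h2
    simp [Complex.I_ne_zero] at this
  · ext W
    simp only [Set.mem_setOf_eq, Set.mem_insert_iff, Set.mem_singleton_iff]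
    constructor
    · rintro ⟨hWS, hWr, hWiso⟩
      obtain ⟨x, hx0, rfl⟩ := aux_rank_one W hWr
      have hxW : x ∈ Submodule.span ℂ ({x} : Set (ℂ ⊗[ℝ] H)) :=
        Submodule.mem_span_singleton_self _
      obtain ⟨α, β, hαβ⟩ := Submodule.mem_span_pair.mp (hSle (hWS hxW))
      have hq0 : α * α + β * β = 0 := by
        rw [← pair α β α β, hαβ]
        exact hWiso x hxW
      have hfact : (β - Complex.I * α) * (β + Complex.I * α) = 0 := by
        have : (β - Complex.I * α) * (β + Complex.I * α) = α * α + β * β := by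
          have h2 : Complex.I * Complex.I = -1 := Complex.I_mul_I
          ring_nf
          linear_combination (-(α^2) : ℂ) * h2
        rw [this, hq0]
      have hα : α ≠ 0 := by
        intro h0
        have hβ : β = 0 := by
          rcases mul_eq_zero.mp hfact with h | h
          · rw [h0] at h; simpa using sub_eq_zero.mp (by simpa using h)
          · rw [h0] at h; simpa using h
        apply hx0
        rw [← hαβ, h0, hβ, zero_smul, zero_smul, add_zero]
      rcases mul_eq_zero.mp hfact with h | h
      · left
        have hβ : β = Complex.I * α := sub_eq_zero.mp h
        have hx : x = α • (E + Complex.I • F) := by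
          rw [← hαβ, hβ, smul_add, smul_smul, mul_comm]
        rw [hx]
        exact Submodule.span_singleton_smul_eq (IsUnit.mk0 α hα) _
      · right
        have hβ : β = -Complex.I * α := by linear_combination h
        have hx : x = α • (E + (-Complex.I) • F) := by
          rw [← hαβ, hβ, smul_add, smul_smul, mul_comm]
        rw [hx]
        exact Submodule.span_singleton_smul_eq (IsUnit.mk0 α hα) _
    · rintro (rfl | rfl)
      · exact ⟨hle₁, hr₁, hiso₁⟩
      · exact ⟨hle₂, hr₂, hiso₂⟩
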